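/- arXiv:math/0110108 — 4 statements merged into one kernel-verified Lean document; each statement's English description precedes it below -/
import Mathlib

section
/- Let P be an n×n stochastic matrix and k ≥ 1. Then the final graph of P^k equals the k-th power of the final graph of P: G^f(P^k) = (G^f(P))^k. In particular, the union of final classes satisfies N^f(P^k) = N^f(P). -/
open Matrix Filter

/-- `f` is additively homogeneous: `f (c·1 + x) = c·1 + f x`. -/
def AddHomog {n : ℕ} (f : (Fin n → ℝ) → (Fin n → ℝ)) : Prop :=
  ∀ (c : ℝ) (x : Fin n → ℝ), f (fun i => c + x i) = fun i => c + f x i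

/-- A map between coordinate spaces is convex if each coordinate function is convex. -/
def IsConvexMap {n m : ℕ} (f : (Fin n → ℝ) → (Fin m → ℝ)) : Prop :=
  ∀ i, ConvexOn ℝ Set.univ (fun x => f x i)

/-- Subdifferential of a convex map `f : ℝ^n → ℝ^m` at `v`: matrices `P` with
`f x - f v ≥ P (x - v)` componentwise. -/
def Subdiff {n m : ℕ} (f : (Fin n → ℝ) → (Fin m → ℝ)) (v : Fin n → ℝ) :
    Set (Matrix (Fin m) (Fin n) ℝ) :=
  {P | ∀ x i, P.mulVec (x - v) i ≤ f x i - f v i}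

/-- `p` is a stochastic vector. -/
def IsStochVec {n : ℕ} (p : Fin n → ℝ) : Prop := (∀ i, 0 ≤ p i) ∧ ∑ i, p i = 1

/-- `P` is a row-stochastic matrix. -/
def IsStochMat {n : ℕ} (P : Matrix (Fin n) (Fin n) ℝ) : Prop := ∀ i, IsStochVec (P i)

/-- `i` has access to `j` in the graph of the nonnegative matrix `P`
(arcs `i → j` when `P i j ≠ 0`). -/
def MatAccess {n : ℕ} (P : Matrix (Fin n) (Fin n) ℝ) : Fin n → Fin n → Prop :=
  Relation.ReflTransGen (fun i j => P i j ≠ 0)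

/-- `C` is a class of `P`: an equivalence class of mutual access. -/
def IsClass {n : ℕ} (P : Matrix (Fin n) (Fin n) ℝ) (C : Set (Fin n)) : Prop :=
  ∃ i, C = {j | MatAccess P i j ∧ MatAccess P j i}

/-- `C` is a final class of `P`: a class with no access out of itself. -/
def IsFinalClass {n : ℕ} (P : Matrix (Fin n) (Fin n) ℝ) (C : Set (Fin n)) : Prop :=
  IsClass P C ∧ ∀ i ∈ C, ∀ j, MatAccess P i j → j ∈ C

/-- `N^f(P)`: the union of the final classes of `P`. -/
def finalNodes {n : ℕ} (P : Matrix (Fin n) (Fin n) ℝ) : Set (Fin n) :=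
  {i | ∃ C, IsFinalClass P C ∧ i ∈ C}

/-- Final graph `G^f(P)`: union of graphs of `P_{FF}` over final classes `F`. -/
def finalGraph {n : ℕ} (P : Matrix (Fin n) (Fin n) ℝ) : Fin n → Fin n → Prop :=
  fun i j => ∃ C, IsFinalClass P C ∧ i ∈ C ∧ j ∈ C ∧ P i j ≠ 0

/-- `N^f(PP)` for a set of matrices. -/
def finalNodesSet {n : ℕ} (PP : Set (Matrix (Fin n) (Fin n) ℝ)) : Set (Fin n) :=
  {i | ∃ P ∈ PP, i ∈ finalNodes P}

/-- `𝒞^f(PP)`: final classes of matrices in `PP`. -/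
def finalClassesSet {n : ℕ} (PP : Set (Matrix (Fin n) (Fin n) ℝ)) : Set (Set (Fin n)) :=
  {C | ∃ P ∈ PP, IsFinalClass P C}

/-- `𝒢^f(PP)`: union of final graphs of matrices in `PP`. -/
def finalGraphSet {n : ℕ} (PP : Set (Matrix (Fin n) (Fin n) ℝ)) : Fin n → Fin n → Prop :=
  fun i j => ∃ P ∈ PP, finalGraph P i j

/-- Access in a directed graph given as a relation. -/
def GAccess {n : ℕ} (G : Fin n → Fin n → Prop) : Fin n → Fin n → Prop :=
  Relation.ReflTransGen G

/-- `C` is a (nontrivial) class of the graph `G`: an equivalence class of mutual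
access containing at least one arc (i.e. the node set of a strongly connected component
of the graph `G`). -/
def IsGraphClass {n : ℕ} (G : Fin n → Fin n → Prop) (C : Set (Fin n)) : Prop :=
  (∃ i, C = {j | GAccess G i j ∧ GAccess G j i}) ∧ ∃ i ∈ C, ∃ j ∈ C, G i j

/-- `G^k`: arcs are directed paths of length `k` in `G`. -/
def GraphPow {n : ℕ} (G : Fin n → Fin n → Prop) (k : ℕ) : Fin n → Fin n → Prop :=
  fun i j => ∃ c : ℕ → Fin n, c 0 = i ∧ c k = j ∧ ∀ t < k, G (c t) (c (t + 1))

/-- There is a circuit of length `ℓ ≥ 1` of `G` with all nodes in `C`. -/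
def HasCircuitIn {n : ℕ} (G : Fin n → Fin n → Prop) (C : Set (Fin n)) (ℓ : ℕ) : Prop :=
  0 < ℓ ∧ ∃ c : ℕ → Fin n, c 0 = c ℓ ∧ (∀ t ≤ ℓ, c t ∈ C) ∧ ∀ t < ℓ, G (c t) (c (t + 1))

/-- gcd of a set of natural numbers. -/
noncomputable def SetGcd (S : Set ℕ) : ℕ :=
  sInf {d | (∀ s ∈ S, d ∣ s) ∧ ∀ e, (∀ s ∈ S, e ∣ s) → e ∣ d}

/-- lcm of a set of natural numbers. -/
noncomputable def SetLcm (S : Set ℕ) : ℕ :=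
  sInf {m | (∀ s ∈ S, s ∣ m) ∧ ∀ e, (∀ s ∈ S, s ∣ e) → m ∣ e}

/-- Cyclicity of a graph: lcm over the strongly connected components of the
gcd of the lengths of their circuits. -/
noncomputable def GraphCyclicity {n : ℕ} (G : Fin n → Fin n → Prop) : ℕ :=
  SetLcm {d | ∃ C, IsGraphClass G C ∧ d = SetGcd {ℓ | HasCircuitIn G C ℓ}}

/-- The (additive) eigenspace of `f` for eigenvalue `lam`. -/
def Eigenspace {n : ℕ} (f : (Fin n → ℝ) → (Fin n → ℝ)) (lam : ℝ) : Set (Fin n → ℝ) :=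
  {x | f x = fun i => lam + x i}

/-- Restriction of a vector to the coordinates in `C`. -/
def restrictTo {n : ℕ} (C : Set (Fin n)) (x : Fin n → ℝ) : C → ℝ := fun i => x i

section Aux

variable {n : ℕ}

private lemma graphPow_zero' (A : Fin n → Fin n → Prop) (i j : Fin n) :
    GraphPow A 0 i j ↔ i = j := by
  constructor
  · rintro ⟨c, h0, hk, -⟩; rw [← h0, hk]
  · rintro rfl; exact ⟨fun _ => i, rfl, rfl, fun t ht => absurd ht (Nat.not_lt_zero t)⟩

private lemma graphPow_one' (A : Fin n → Fin n → Prop) (i j : Fin n) :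
    GraphPow A 1 i j ↔ A i j := by
  constructor
  · rintro ⟨c, h0, hk, hs⟩
    have := hs 0 Nat.one_pos
    rwa [h0, hk] at this
  · intro h
    refine ⟨fun t => if t = 0 then i else j, by simp, by simp, ?_⟩
    intro t ht
    interval_cases t
    simpa using h

private lemma graphPow_trans' {A : Fin n → Fin n → Prop} {a b : ℕ} {i j l : Fin n}
    (h1 : GraphPow A a i j) (h2 : GraphPow A b j l) : GraphPow A (a + b) i l := by
  obtain ⟨c1, hc10, hc1a, hs1⟩ := h1
  obtain ⟨c2, hc20, hc2b, hs2⟩ := h2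
  refine ⟨fun t => if t < a then c1 t else c2 (t - a), ?_, ?_, ?_⟩
  · by_cases ha : 0 < a
    · simp [ha, hc10]
    · have : a = 0 := by omega
      subst this
      simp [hc20, ← hc10, hc1a]
  · have : ¬ (a + b < a) := by omega
    simp only [this, if_false]
    simpa using hc2b
  · intro t ht
    by_cases h1t : t + 1 < a
    · have h2t : t < a := by omega
      simp only [if_pos h1t, if_pos h2t]
      exact hs1 t (by omega)
    · by_cases h2t : t < a
      · have ha : t + 1 = a := by omega
        simp only [if_pos h2t, if_neg h1t]
        have e1 : c2 (t + 1 - a) = c1 (t + 1) := by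
          rw [ha]; simp [hc20, ← hc1a]
        rw [e1]
        exact hs1 t (by omega)
      · simp only [if_neg h1t, if_neg h2t]
        have e1 : t + 1 - a = (t - a) + 1 := by omega
        rw [e1]
        exact hs2 (t - a) (by omega)

private lemma graphPow_split' {A : Fin n → Fin n → Prop} {a b : ℕ} {i l : Fin n}
    (h : GraphPow A (a + b) i l) : ∃ j, GraphPow A a i j ∧ GraphPow A b j l := by
  obtain ⟨c, h0, hab, hs⟩ := h
  refine ⟨c a, ⟨c, h0, rfl, fun t ht => hs t (by omega)⟩,
    ⟨fun t => c (a + t), rfl, by rw [← hab], ?_⟩⟩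
  intro t ht
  have := hs (a + t) (by omega)
  show A (c (a + t)) (c (a + (t + 1)))
  have e : a + (t + 1) = a + t + 1 := by omega
  rw [e]
  exact this

private lemma graphPow_iter' {A : Fin n → Fin n → Prop} {L : ℕ} {i : Fin n}
    (h : GraphPow A L i i) : ∀ m, GraphPow A (m * L) i i := by
  intro m
  induction m with
  | zero => rw [Nat.zero_mul]; exact (graphPow_zero' A i i).2 rfl
  | succ m ih =>
    rw [Nat.succ_mul]
    exact graphPow_trans' ih h

private lemma reflTransGen_iff_graphPow {A : Fin n → Fin n → Prop} {i j : Fin n} :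
    Relation.ReflTransGen A i j ↔ ∃ m, GraphPow A m i j := by
  constructor
  · intro h
    induction h with
    | refl => exact ⟨0, (graphPow_zero' A i i).2 rfl⟩
    | tail _ hbc ih =>
      obtain ⟨m, hm⟩ := ih
      exact ⟨m + 1, graphPow_trans' hm ((graphPow_one' A _ _).2 hbc)⟩
  · rintro ⟨m, hm⟩
    induction m generalizing j with
    | zero =>
      rw [graphPow_zero'] at hm
      subst hm; exact .refl
    | succ m ih =>
      obtain ⟨l, hl1, hl2⟩ := graphPow_split' (a := m) (b := 1) hm
      exact (ih hl1).tail ((graphPow_one' A _ _).1 hl2)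

private lemma pow_entry_nonneg {P : Matrix (Fin n) (Fin n) ℝ}
    (hP : ∀ i j, 0 ≤ P i j) (m : ℕ) : ∀ i j, 0 ≤ (P ^ m) i j := by
  induction m with
  | zero =>
    intro i j
    rw [pow_zero, Matrix.one_apply]
    split <;> norm_num
  | succ m ih =>
    intro i j
    rw [pow_succ, Matrix.mul_apply]
    exact Finset.sum_nonneg fun l _ => mul_nonneg (ih i l) (hP l j)

private lemma pow_ne_zero_iff' {P : Matrix (Fin n) (Fin n) ℝ}
    (hP : ∀ i j, 0 ≤ P i j) (m : ℕ) (i j : Fin n) :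
    (P ^ m) i j ≠ 0 ↔ GraphPow (fun a b => P a b ≠ 0) m i j := by
  induction m generalizing j with
  | zero =>
    rw [pow_zero, Matrix.one_apply, graphPow_zero']
    split <;> simp_all
  | succ m ih =>
    rw [pow_succ, Matrix.mul_apply]
    constructor
    · intro h
      have : ∃ l ∈ Finset.univ, (P ^ m) i l * P l j ≠ 0 := by
        by_contra hc
        push_neg at hc
        exact h (Finset.sum_eq_zero fun l hl => hc l hl)
      obtain ⟨l, -, hl⟩ := this
      rw [mul_ne_zero_iff] at hl
      exact graphPow_trans' ((ih l).1 hl.1) ((graphPow_one' _ _ _).2 hl.2)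
    · intro h
      obtain ⟨l, hl1, hl2⟩ := graphPow_split' (a := m) (b := 1) h
      have hl2' : P l j ≠ 0 := (graphPow_one' _ _ _).1 hl2
      have hl1' : (P ^ m) i l ≠ 0 := (ih l).2 hl1
      have hpos : 0 < (P ^ m) i l * P l j :=
        lt_of_le_of_ne (mul_nonneg (pow_entry_nonneg hP m i l) (hP l j))
          (Ne.symm (mul_ne_zero hl1' hl2'))
      have : 0 < ∑ x, (P ^ m) i x * P x j :=
        Finset.sum_pos' (fun x _ => mul_nonneg (pow_entry_nonneg hP m i x) (hP x j))
          ⟨l, Finset.mem_univ l, hpos⟩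
      exact ne_of_gt this

private lemma matAccess_pow_iff {P : Matrix (Fin n) (Fin n) ℝ}
    (hP : ∀ i j, 0 ≤ P i j) (k : ℕ) (i j : Fin n) :
    MatAccess (P ^ k) i j ↔ ∃ m, GraphPow (fun a b => P a b ≠ 0) (m * k) i j := by
  constructor
  · intro h
    induction h with
    | refl => exact ⟨0, by rw [Nat.zero_mul]; exact (graphPow_zero' _ i i).2 rfl⟩
    | tail _ hbc ih =>
      obtain ⟨m, hm⟩ := ih
      rw [pow_ne_zero_iff' hP] at hbc
      exact ⟨m + 1, by rw [Nat.succ_mul]; exact graphPow_trans' hm hbc⟩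
  · rintro ⟨m, hm⟩
    induction m generalizing j with
    | zero =>
      rw [Nat.zero_mul, graphPow_zero'] at hm
      subst hm; exact .refl
    | succ m ih =>
      rw [Nat.succ_mul] at hm
      obtain ⟨l, hl1, hl2⟩ := graphPow_split' hm
      exact (ih l hl1).tail ((pow_ne_zero_iff' hP k l j).2 hl2)

private lemma matAccess_of_graphPow {P : Matrix (Fin n) (Fin n) ℝ} {m : ℕ} {i j : Fin n}
    (h : GraphPow (fun a b => P a b ≠ 0) m i j) : MatAccess P i j :=
  reflTransGen_iff_graphPow.2 ⟨m, h⟩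

private lemma matAccess_pow_mono {P : Matrix (Fin n) (Fin n) ℝ}
    (hP : ∀ i j, 0 ≤ P i j) {k : ℕ} {i j : Fin n}
    (h : MatAccess (P ^ k) i j) : MatAccess P i j := by
  obtain ⟨m, hm⟩ := (matAccess_pow_iff hP k i j).1 h
  exact matAccess_of_graphPow hm

private lemma exists_arc {P : Matrix (Fin n) (Fin n) ℝ} (hP : IsStochMat P) (i : Fin n) :
    ∃ j, P i j ≠ 0 := by
  by_contra h
  push_neg at h
  have := (hP i).2
  rw [Finset.sum_eq_zero (fun j _ => h j)] at this
  norm_num at this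

private lemma exists_path_len {P : Matrix (Fin n) (Fin n) ℝ} (hP : IsStochMat P)
    (m : ℕ) (i : Fin n) : ∃ j, GraphPow (fun a b => P a b ≠ 0) m i j := by
  induction m with
  | zero => exact ⟨i, (graphPow_zero' _ i i).2 rfl⟩
  | succ m ih =>
    obtain ⟨j, hj⟩ := ih
    obtain ⟨l, hl⟩ := exists_arc hP j
    exact ⟨l, graphPow_trans' hj ((graphPow_one' _ _ _).2 hl)⟩

private lemma mem_class_mutual {P : Matrix (Fin n) (Fin n) ℝ} {C : Set (Fin n)}
    (hC : IsClass P C) {i j : Fin n} (hi : i ∈ C) (hj : j ∈ C) :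
    MatAccess P i j ∧ MatAccess P j i := by
  obtain ⟨i₀, rfl⟩ := hC
  exact ⟨Relation.ReflTransGen.trans hi.2 hj.1, Relation.ReflTransGen.trans hj.2 hi.1⟩

private lemma class_eq_of_mem {P : Matrix (Fin n) (Fin n) ℝ} {C : Set (Fin n)}
    (hC : IsClass P C) {i : Fin n} (hi : i ∈ C) :
    C = {j | MatAccess P i j ∧ MatAccess P j i} := by
  obtain ⟨i₀, rfl⟩ := hC
  ext j
  constructor
  · rintro ⟨h1, h2⟩
    exact ⟨Relation.ReflTransGen.trans hi.2 h1, Relation.ReflTransGen.trans h2 hi.1⟩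
  · rintro ⟨h1, h2⟩
    exact ⟨Relation.ReflTransGen.trans hi.1 h1, Relation.ReflTransGen.trans h2 hi.2⟩

/-- Key symmetry: within a final class, a path `i→j` of length a multiple of `k`
can be reversed to a path `j→i` of length a multiple of `k`. -/
private lemma key_symm {P : Matrix (Fin n) (Fin n) ℝ} {C : Set (Fin n)}
    (hC : IsFinalClass P C) {i : Fin n} (hi : i ∈ C) {k : ℕ} (hk : 1 ≤ k)
    {m : ℕ} {j : Fin n} (hpath : GraphPow (fun a b => P a b ≠ 0) (m * k) i j) :
    ∃ m', GraphPow (fun a b => P a b ≠ 0) (m' * k) j i := by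
  obtain ⟨k', rfl⟩ : ∃ k', k = k' + 1 := ⟨k - 1, by omega⟩
  have hij : MatAccess P i j := matAccess_of_graphPow hpath
  have hj : j ∈ C := hC.2 i hi j hij
  have hji : MatAccess P j i := (mem_class_mutual hC.1 hj hi).1
  obtain ⟨s, hs⟩ := reflTransGen_iff_graphPow.1 hji
  -- circuit at i of length m*k + s
  have hcirc : GraphPow (fun a b => P a b ≠ 0) (m * (k' + 1) + s) i i :=
    graphPow_trans' hpath hs
  have hrep := graphPow_iter' hcirc k'
  have htot : GraphPow (fun a b => P a b ≠ 0) (s + k' * (m * (k' + 1) + s)) j i :=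
    graphPow_trans' hs hrep
  refine ⟨s + k' * m, ?_⟩
  have e : (s + k' * m) * (k' + 1) = s + k' * (m * (k' + 1) + s) := by ring
  rwa [e]

/-- The set of nodes `P^k`-accessible from a node of a final class of `P`
is a final class of `P^k`. -/
private lemma final_class_pow {P : Matrix (Fin n) (Fin n) ℝ} (hP : ∀ i j, 0 ≤ P i j)
    {C : Set (Fin n)} (hC : IsFinalClass P C) {i : Fin n} (hi : i ∈ C)
    {k : ℕ} (hk : 1 ≤ k) :
    IsFinalClass (P ^ k) {j | MatAccess (P ^ k) i j} := by
  have hsymm : ∀ j, MatAccess (P ^ k) i j → MatAccess (P ^ k) j i := by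
    intro j hij
    obtain ⟨m, hm⟩ := (matAccess_pow_iff hP k i j).1 hij
    obtain ⟨m', hm'⟩ := key_symm hC hi hk hm
    exact (matAccess_pow_iff hP k j i).2 ⟨m', hm'⟩
  constructor
  · refine ⟨i, ?_⟩
    ext j
    exact ⟨fun h => ⟨h, hsymm j h⟩, fun h => h.1⟩
  · intro j hj l hjl
    exact Relation.ReflTransGen.trans hj hjl

/-- A node in a final class of `P^k` is in a final class of `P`. -/
private lemma final_class_of_pow {P : Matrix (Fin n) (Fin n) ℝ} (hP : IsStochMat P)
    (hPnn : ∀ i j, 0 ≤ P i j) {k : ℕ} (hk : 1 ≤ k) {i : Fin n}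
    (hi : i ∈ finalNodes (P ^ k)) :
    IsFinalClass P {j | MatAccess P i j ∧ MatAccess P j i} := by
  obtain ⟨D, hD, hiD⟩ := hi
  refine ⟨⟨i, rfl⟩, ?_⟩
  rintro j ⟨hij, hji⟩ l hjl
  have hil : MatAccess P i l := Relation.ReflTransGen.trans hij hjl
  obtain ⟨b, hb⟩ := reflTransGen_iff_graphPow.1 hil
  obtain ⟨w, hw⟩ := exists_path_len hP (b * (k - 1)) l
  have hiw : GraphPow (fun a b => P a b ≠ 0) (b + b * (k - 1)) i w :=
    graphPow_trans' hb hw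
  have e : b + b * (k - 1) = b * k := by
    obtain ⟨k', rfl⟩ : ∃ k', k = k' + 1 := ⟨k - 1, by omega⟩
    simp [Nat.mul_succ, Nat.add_comm]
  rw [e] at hiw
  have hiw' : MatAccess (P ^ k) i w := (matAccess_pow_iff hPnn k i w).2 ⟨b, hiw⟩
  have hwD : w ∈ D := hD.2 i hiD w hiw'
  have hwi : MatAccess (P ^ k) w i := (mem_class_mutual hD.1 hwD hiD).1
  have hwi' : MatAccess P w i := matAccess_pow_mono hPnn hwi
  exact ⟨hil, Relation.ReflTransGen.trans (matAccess_of_graphPow hw) hwi'⟩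

end Aux

/-- for a stochastic matrix `P` and `k ≥ 1`, the final graph of `P^k`
is the `k`-th power of the final graph of `P`; in particular the union of the final
classes of `P^k` equals that of `P`. -/
theorem stmt9 (n : ℕ) (hn : 1 ≤ n) (P : Matrix (Fin n) (Fin n) ℝ)
    (hP : IsStochMat P) (k : ℕ) (hk : 1 ≤ k) :
    (∀ i j, finalGraph (P ^ k) i j ↔ GraphPow (finalGraph P) k i j) ∧
    finalNodes (P ^ k) = finalNodes P := by
  have hPnn : ∀ i j, 0 ≤ P i j := fun i j => (hP i).1 j
  constructor
  · intro i j
    constructor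
    · rintro ⟨D, hD, hiD, hjD, hne⟩
      have hC : IsFinalClass P {l | MatAccess P i l ∧ MatAccess P l i} :=
        final_class_of_pow hP hPnn hk ⟨D, hD, hiD⟩
      obtain ⟨c, hc0, hck, hcs⟩ := (pow_ne_zero_iff' hPnn k i j).1 hne
      have hct : ∀ t, t ≤ k → c t ∈ {l | MatAccess P i l ∧ MatAccess P l i} := by
        intro t htk
        have hpre : GraphPow (fun a b => P a b ≠ 0) t i (c t) :=
          ⟨c, hc0, rfl, fun t' ht' => hcs t' (lt_of_lt_of_le ht' htk)⟩
        exact hC.2 i ⟨.refl, .refl⟩ (c t) (matAccess_of_graphPow hpre)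
      refine ⟨c, hc0, hck, fun t ht => ?_⟩
      exact ⟨{l | MatAccess P i l ∧ MatAccess P l i}, hC, hct t (le_of_lt ht),
        hct (t + 1) ht, hcs t ht⟩
    · rintro ⟨c, hc0, hck, hcs⟩
      obtain ⟨C, hC, h0C, h1C, -⟩ := hcs 0 (by omega)
      -- all nodes of the path lie in C
      have hall : ∀ t, t ≤ k → c t ∈ C := by
        intro t htk
        induction t with
        | zero => exact h0C
        | succ t ih =>
          obtain ⟨C', hC', htC', ht1C', -⟩ := hcs t (by omega)
          have hCt : c t ∈ C := ih (by omega)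
          -- C = C' since they are classes sharing the node c t
          have : C = C' := by
            rw [class_eq_of_mem hC.1 hCt, class_eq_of_mem hC'.1 htC']
          rw [this]
          exact ht1C'
      have hiC : i ∈ C := hc0 ▸ h0C
      have hjC : j ∈ C := hck ▸ hall k le_rfl
      have harc : ∀ t, t < k → P (c t) (c (t + 1)) ≠ 0 := by
        intro t ht
        obtain ⟨-, -, -, -, h⟩ := hcs t ht
        exact h
      have hne : (P ^ k) i j ≠ 0 :=
        (pow_ne_zero_iff' hPnn k i j).2 ⟨c, hc0, hck, harc⟩
      have hD : IsFinalClass (P ^ k) {l | MatAccess (P ^ k) i l} :=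
        final_class_pow hPnn hC hiC hk
      exact ⟨{l | MatAccess (P ^ k) i l}, hD, Relation.ReflTransGen.refl,
        Relation.ReflTransGen.single hne, hne⟩
  · ext i
    constructor
    · intro hi
      exact ⟨{j | MatAccess P i j ∧ MatAccess P j i},
        final_class_of_pow hP hPnn hk hi, ⟨.refl, .refl⟩⟩
    · rintro ⟨C, hC, hiC⟩
      exact ⟨{j | MatAccess (P ^ k) i j}, final_class_pow hPnn hC hiC hk,
        Relation.ReflTransGen.refl⟩
end

section
/- Let f : ℝ^n → ℝ^n be convex, monotone, and additively homogeneous, with a fixed point v, and let F ⊆ {1,…,n}. The following are equivalent: (1) F is a union of elements of 𝒞^c(f) = 𝒞^f(∂f(v)); (2) there exists a stochastic row vector m whose support is exactly F (m_i > 0 iff i ∈ F) such that m·f(x) ≥ m·x for all x ∈ ℝ^n; (3) there exists a stochastic row vector m whose support is exactly F such that m·f'_v(x) ≥ m·x for all x ∈ ℝ^n, where f'_v(x) = lim_{ε→0+} (f(v + εx) − f(v))/ε is the one-sided directional derivative of f at v. -/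
open Matrix Filter

section Stmt13AuxSec
open Set

namespace Stmt13Aux

variable {n : ℕ} {f : (Fin n → ℝ) → (Fin n → ℝ)} {v x y : Fin n → ℝ} {i : Fin n}

noncomputable def sl (f : (Fin n → ℝ) → (Fin n → ℝ)) (v x : Fin n → ℝ) (i : Fin n) (ε : ℝ) : ℝ :=
  (f (v + ε • x) i - f v i) / ε

noncomputable def Dder (f : (Fin n → ℝ) → (Fin n → ℝ)) (v x : Fin n → ℝ) (i : Fin n) : ℝ :=
  sInf (sl f v x i '' Set.Ioi 0)

lemma nonexp (hmon : Monotone f) (hhom : AddHomog f) (x y : Fin n → ℝ) (i : Fin n) :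
    f x i - f y i ≤ ‖x - y‖ := by
  have h1 : x ≤ fun j => ‖x - y‖ + y j := by
    intro j
    have h2 : |x j - y j| ≤ ‖x - y‖ := by
      simpa [Real.norm_eq_abs] using norm_le_pi_norm (x - y) j
    have := (abs_le.mp h2).2
    simpa using by linarith
  have h3 := hmon h1
  rw [hhom ‖x - y‖ y] at h3
  have h4 : f x i ≤ ‖x - y‖ + f y i := h3 i
  linarith

lemma line_convex (hconv : IsConvexMap f) (v x : Fin n → ℝ) (i : Fin n) :
    ConvexOn ℝ Set.univ (fun t : ℝ => f (v + t • x) i) := by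
  have h := (hconv i).comp_affineMap (AffineMap.lineMap v (v + x) : ℝ →ᵃ[ℝ] (Fin n → ℝ))
  have heq : (fun t : ℝ => f (v + t • x) i) =
      ((fun z => f z i) ∘ (AffineMap.lineMap v (v + x) : ℝ →ᵃ[ℝ] (Fin n → ℝ))) := by
    funext t
    simp [AffineMap.lineMap_apply, add_comm]
  rw [heq]
  simpa using h

lemma slope_mono (hconv : IsConvexMap f) (v x : Fin n → ℝ) (i : Fin n) :
    MonotoneOn (sl f v x i) (Set.Ioi 0) := by
  intro a ha b hb hab
  have h := (line_convex hconv v x i).slope_mono (Set.mem_univ (0:ℝ))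
    (show a ∈ Set.univ \ {0} from ⟨trivial, ne_of_gt ha⟩)
    (show b ∈ Set.univ \ {0} from ⟨trivial, ne_of_gt hb⟩) hab
  simpa [slope_def_field, sl] using h

lemma slope_lb (hmon : Monotone f) (hhom : AddHomog f) {ε : ℝ} (hε : 0 < ε) :
    -‖x‖ ≤ sl f v x i ε := by
  have h1 : f v i - f (v + ε • x) i ≤ ‖v - (v + ε • x)‖ := nonexp hmon hhom _ _ _
  have h2 : ‖v - (v + ε • x)‖ = ε * ‖x‖ := by
    simp [norm_smul, abs_of_pos hε]
  rw [sl, le_div_iff₀ hε]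
  nlinarith [h1, h2]

lemma bddBelow_sl (hmon : Monotone f) (hhom : AddHomog f) :
    BddBelow (sl f v x i '' Set.Ioi 0) := by
  refine ⟨-‖x‖, ?_⟩
  rintro s ⟨ε, hε, rfl⟩
  exact slope_lb hmon hhom hε

lemma tendsto_sl (hconv : IsConvexMap f) (hmon : Monotone f) (hhom : AddHomog f) :
    Tendsto (sl f v x i) (nhdsWithin 0 (Set.Ioi 0)) (nhds (Dder f v x i)) :=
  MonotoneOn.tendsto_nhdsGT (slope_mono hconv v x i) (bddBelow_sl hmon hhom)

lemma Dder_le_sl (hmon : Monotone f) (hhom : AddHomog f) {ε : ℝ} (hε : 0 < ε) :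
    Dder f v x i ≤ sl f v x i ε :=
  csInf_le (bddBelow_sl hmon hhom) ⟨ε, Set.mem_Ioi.mpr hε, rfl⟩

lemma Dder_le (hmon : Monotone f) (hhom : AddHomog f) :
    Dder f v x i ≤ f (v + x) i - f v i := by
  simpa [sl] using Dder_le_sl (v := v) (x := x) (i := i) hmon hhom one_pos

lemma Dder_lb (hmon : Monotone f) (hhom : AddHomog f) : -‖x‖ ≤ Dder f v x i := by
  refine le_csInf ⟨sl f v x i 1, 1, Set.mem_Ioi.mpr one_pos, rfl⟩ ?_
  rintro s ⟨ε, hε, rfl⟩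
  exact slope_lb hmon hhom hε

lemma tendsto_mul_Ioi {c : ℝ} (hc : 0 < c) :
    Tendsto (fun ε : ℝ => c * ε) (nhdsWithin 0 (Set.Ioi 0)) (nhdsWithin 0 (Set.Ioi 0)) := by
  apply tendsto_nhdsWithin_of_tendsto_nhds_of_eventually_within
  · have : Tendsto (fun ε : ℝ => c * ε) (nhds 0) (nhds (c * 0)) :=
      (continuous_const.mul continuous_id).tendsto 0
    simpa using this.mono_left nhdsWithin_le_nhds
  · filter_upwards [self_mem_nhdsWithin] with ε hε
    exact mul_pos hc hε


lemma Dder_zero (hmon : Monotone f) (hhom : AddHomog f) : Dder f v 0 i = 0 := by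
  have h0 : ∀ ε ∈ Set.Ioi (0:ℝ), sl f v (0 : Fin n → ℝ) i ε = 0 := by
    intro ε hε
    simp [sl]
  refine le_antisymm ?_ ?_
  · have := Dder_le_sl (f := f) (v := v) (x := (0 : Fin n → ℝ)) (i := i) hmon hhom one_pos
    rw [h0 1 (Set.mem_Ioi.mpr one_pos)] at this
    exact this
  · refine le_csInf ⟨sl f v 0 i 1, 1, Set.mem_Ioi.mpr one_pos, rfl⟩ ?_
    rintro s ⟨ε, hε, rfl⟩
    rw [h0 ε hε]

lemma Dder_smul (hconv : IsConvexMap f) (hmon : Monotone f) (hhom : AddHomog f)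
    {c : ℝ} (hc : 0 < c) : Dder f v (c • x) i = c * Dder f v x i := by
  have h1 : Tendsto (sl f v (c • x) i) (nhdsWithin 0 (Set.Ioi 0))
      (nhds (Dder f v (c • x) i)) := tendsto_sl hconv hmon hhom
  have h2 : Tendsto (fun ε => c * sl f v x i (c * ε)) (nhdsWithin 0 (Set.Ioi 0))
      (nhds (c * Dder f v x i)) :=
    ((tendsto_sl hconv hmon hhom).comp (tendsto_mul_Ioi hc)).const_mul c
  have heq : ∀ᶠ ε in nhdsWithin (0:ℝ) (Set.Ioi 0),
      sl f v (c • x) i ε = c * sl f v x i (c * ε) := by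
    filter_upwards [self_mem_nhdsWithin] with ε (hε : (0:ℝ) < ε)
    rw [sl, sl, smul_smul, mul_comm ε c, eq_comm]
    field_simp
  exact tendsto_nhds_unique (h1.congr' heq) h2

lemma sl_add_le (hconv : IsConvexMap f) {ε : ℝ} (hε : 0 < ε) :
    sl f v (x + y) i ε ≤ sl f v x i (2 * ε) + sl f v y i (2 * ε) := by
  have harg : ((1:ℝ)/2) • (v + (2*ε) • x) + ((1:ℝ)/2) • (v + (2*ε) • y)
      = v + ε • (x + y) := by
    ext j
    simp only [Pi.add_apply, Pi.smul_apply, smul_eq_mul]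
    ring
  have key := (hconv i).2 (mem_univ (v + (2*ε) • x)) (mem_univ (v + (2*ε) • y))
    (by norm_num : (0:ℝ) ≤ 1/2) (by norm_num : (0:ℝ) ≤ 1/2) (by norm_num)
  rw [harg] at key
  simp only [smul_eq_mul] at key
  rw [sl, sl, sl, ← add_div, div_le_div_iff₀ hε (by linarith : (0:ℝ) < 2 * ε)]
  nlinarith [key]

lemma Dder_add_le (hconv : IsConvexMap f) (hmon : Monotone f) (hhom : AddHomog f) :
    Dder f v (x + y) i ≤ Dder f v x i + Dder f v y i := by
  have h1 : Tendsto (sl f v (x + y) i) (nhdsWithin 0 (Set.Ioi 0))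
      (nhds (Dder f v (x + y) i)) := tendsto_sl hconv hmon hhom
  have h2 : Tendsto (fun ε => sl f v x i (2 * ε) + sl f v y i (2 * ε))
      (nhdsWithin 0 (Set.Ioi 0)) (nhds (Dder f v x i + Dder f v y i)) :=
    (((tendsto_sl hconv hmon hhom).comp (tendsto_mul_Ioi two_pos)).add
      ((tendsto_sl hconv hmon hhom).comp (tendsto_mul_Ioi two_pos)))
  refine le_of_tendsto_of_tendsto h1 h2 ?_
  filter_upwards [self_mem_nhdsWithin] with ε (hε : (0:ℝ) < ε)
  exact sl_add_le hconv hε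

lemma Dder_smul_le (hconv : IsConvexMap f) (hmon : Monotone f) (hhom : AddHomog f)
    (t : ℝ) : t * Dder f v x i ≤ Dder f v (t • x) i := by
  rcases lt_trichotomy t 0 with ht | rfl | ht
  · have hneg : Dder f v (t • x) i = (-t) * Dder f v (-x) i := by
      have : t • x = (-t) • (-x) := by simp
      rw [this, Dder_smul hconv hmon hhom (by linarith : (0:ℝ) < -t)]
    rw [hneg]
    have hsum : (0:ℝ) ≤ Dder f v x i + Dder f v (-x) i := by
      have h1 := Dder_add_le (f := f) (v := v) (x := x) (y := -x) (i := i) hconv hmon hhom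
      rw [add_neg_cancel, Dder_zero hmon hhom] at h1
      linarith
    nlinarith [hsum]
  · simp [Dder_zero hmon hhom]
  · rw [Dder_smul hconv hmon hhom ht]


lemma Dder_le_norm (hmon : Monotone f) (hhom : AddHomog f) : Dder f v x i ≤ ‖x‖ := by
  refine le_trans (Dder_le hmon hhom) ?_
  have := nonexp hmon hhom (v + x) v i
  simpa using this

/-- subdifferential of the sublinear map `Dder f v · i` -/
def K (f : (Fin n → ℝ) → (Fin n → ℝ)) (v : Fin n → ℝ) (i : Fin n) : Set (Fin n → ℝ) :=
  {q | ∀ y, ∑ j, q j * y j ≤ Dder f v y i}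

lemma exists_mem_K_ne (hconv : IsConvexMap f) (hmon : Monotone f) (hhom : AddHomog f)
    (hx : x ≠ 0) : ∃ q ∈ K f v i, ∑ j, q j * x j = Dder f v x i := by
  set pm := LinearPMap.mkSpanSingleton (K := ℝ) (L := ℝ) (σ := RingHom.id ℝ) x (Dder f v x i) hx with hpm
  have hdom : ∀ z : pm.domain, pm z ≤ Dder f v (z : Fin n → ℝ) i := by
    rintro ⟨z, hz⟩
    have hz' : z ∈ Submodule.span ℝ {x} := hz
    obtain ⟨c, hc⟩ := Submodule.mem_span_singleton.mp hz'
    have hsub : (⟨z, hz⟩ : pm.domain) = ⟨c • x, hc ▸ hz⟩ := by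
      apply Subtype.ext
      exact hc.symm
    rw [hsub]
    have happ : pm ⟨c • x, hc ▸ hz⟩ = c • Dder f v x i :=
      LinearPMap.mkSpanSingleton'_apply _ _ _ c _
    rw [happ]
    show c • Dder f v x i ≤ Dder f v (c • x) i
    simpa [smul_eq_mul] using Dder_smul_le hconv hmon hhom c
  obtain ⟨g, hg_ext, hg_le⟩ := exists_extension_of_le_sublinear pm (fun z => Dder f v z i)
    (fun c hc z => Dder_smul hconv hmon hhom hc)
    (fun a b => Dder_add_le hconv hmon hhom) hdom
  refine ⟨fun j => g (fun k => if j = k then 1 else 0), ?_, ?_⟩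
  · intro y
    have hrepr := LinearMap.pi_apply_eq_sum_univ g y
    have : ∑ j, g (fun k => if j = k then 1 else 0) * y j = g y := by
      rw [hrepr]
      exact Finset.sum_congr rfl fun j _ => by rw [smul_eq_mul, mul_comm]
    rw [this]
    exact hg_le y
  · have hrepr := LinearMap.pi_apply_eq_sum_univ g x
    have h1 : ∑ j, g (fun k => if j = k then 1 else 0) * x j = g x := by
      rw [hrepr]
      exact Finset.sum_congr rfl fun j _ => by rw [smul_eq_mul, mul_comm]
    rw [h1]
    have h2 := hg_ext ⟨x, Submodule.mem_span_singleton_self x⟩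
    exact h2.trans (LinearPMap.mkSpanSingleton_apply ℝ ℝ (σ := RingHom.id ℝ) hx (Dder f v x i))

lemma exists_mem_K (hconv : IsConvexMap f) (hmon : Monotone f) (hhom : AddHomog f)
    (x : Fin n → ℝ) (i : Fin n) : ∃ q ∈ K f v i, ∑ j, q j * x j = Dder f v x i := by
  by_cases hx : x = 0
  · subst hx
    have he : (fun k => if k = i then (1:ℝ) else 0) ≠ 0 := by
      intro h
      have := congr_fun h i
      simp at this
    obtain ⟨q, hq, -⟩ := exists_mem_K_ne (v := v) (i := i) hconv hmon hhom he
    exact ⟨q, hq, by simp [Dder_zero hmon hhom]⟩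
  · exact exists_mem_K_ne hconv hmon hhom hx

lemma K_subgrad (hmon : Monotone f) (hhom : AddHomog f) {q : Fin n → ℝ} (hq : q ∈ K f v i)
    (z : Fin n → ℝ) : ∑ j, q j * z j ≤ f (v + z) i - f v i :=
  le_trans (hq z) (Dder_le hmon hhom)

lemma K_norm_le (hmon : Monotone f) (hhom : AddHomog f) {q : Fin n → ℝ} (hq : q ∈ K f v i) :
    ‖q‖ ≤ 1 := by
  have hb : ∀ j, |q j| ≤ 1 := by
    intro j
    have hn1 : ‖(fun k => if k = j then (1:ℝ) else 0 : Fin n → ℝ)‖ ≤ 1 := by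
      rw [pi_norm_le_iff_of_nonneg zero_le_one]
      intro k
      by_cases h : k = j <;> simp [h]
    have h1 : q j ≤ 1 := by
      have hle := le_trans (hq (fun k => if k = j then 1 else 0)) (Dder_le_norm hmon hhom)
      have he : ∑ k, q k * (if k = j then (1:ℝ) else 0) = q j := by
        simp [mul_ite]
      rw [he] at hle
      exact le_trans hle hn1
    have h2 : -q j ≤ 1 := by
      have hn2 : ‖(fun k => if k = j then (-1:ℝ) else 0 : Fin n → ℝ)‖ ≤ 1 := by
        rw [pi_norm_le_iff_of_nonneg zero_le_one]
        intro k
        by_cases h : k = j <;> simp [h]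
      have hle := le_trans (hq (fun k => if k = j then -1 else 0)) (Dder_le_norm hmon hhom)
      have he : ∑ k, q k * (if k = j then (-1:ℝ) else 0) = -q j := by
        simp [mul_ite]
      rw [he] at hle
      exact le_trans hle hn2
    exact abs_le.mpr ⟨by linarith, h1⟩
  rw [pi_norm_le_iff_of_nonneg zero_le_one]
  intro j
  simpa [Real.norm_eq_abs] using hb j

lemma K_isClosed : IsClosed (K f v i) := by
  have : K f v i = ⋂ y, {q : Fin n → ℝ | ∑ j, q j * y j ≤ Dder f v y i} := by
    ext q; simp [K, Set.mem_iInter]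
  rw [this]
  exact isClosed_iInter fun y => isClosed_le
    (continuous_finset_sum _ fun j _ => (continuous_apply j).mul continuous_const)
    continuous_const

lemma K_isCompact (hmon : Monotone f) (hhom : AddHomog f) : IsCompact (K f v i) := by
  refine (isCompact_closedBall (0 : Fin n → ℝ) 1).of_isClosed_subset K_isClosed ?_
  intro q hq
  simpa [Metric.mem_closedBall, dist_eq_norm] using K_norm_le hmon hhom hq

lemma K_convex : Convex ℝ (K f v i) := by
  intro q hq r hr a b ha hb hab
  intro y
  have h1 : ∑ j, (a • q + b • r) j * y j
      = a * (∑ j, q j * y j) + b * (∑ j, r j * y j) := by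
    rw [Finset.mul_sum, Finset.mul_sum, ← Finset.sum_add_distrib]
    refine Finset.sum_congr rfl fun j _ => ?_
    simp only [Pi.add_apply, Pi.smul_apply, smul_eq_mul]
    ring
  rw [h1]
  calc a * (∑ j, q j * y j) + b * (∑ j, r j * y j)
      ≤ a * Dder f v y i + b * Dder f v y i :=
        add_le_add (mul_le_mul_of_nonneg_left (hq y) ha) (mul_le_mul_of_nonneg_left (hr y) hb)
    _ = Dder f v y i := by rw [← add_mul, hab, one_mul]


lemma exists_matrix (hconv : IsConvexMap f) (hmon : Monotone f) (hhom : AddHomog f)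
    (m : Fin n → ℝ)
    (hDin : ∀ x, ∑ i, m i * x i ≤ ∑ i, m i * Dder f v x i) :
    ∃ Q : Matrix (Fin n) (Fin n) ℝ, (∀ i, Q i ∈ K f v i) ∧ ∀ j, ∑ i, m i * Q i j = m j := by
  classical
  set Φ : (Fin n → Fin n → ℝ) → (Fin n → ℝ) := fun Q => fun j => ∑ i, m i * Q i j with hΦ
  set S : Set (Fin n → ℝ) := Φ '' (Set.univ.pi (fun i => K f v i)) with hS
  suffices hmem : m ∈ S by
    obtain ⟨Q, hQpi, hQeq⟩ := hmem
    exact ⟨Matrix.of Q, fun i => hQpi i trivial, fun j => congr_fun hQeq j⟩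
  by_contra hm
  have hlin : IsLinearMap ℝ Φ := by
    constructor
    · intro Q R
      funext j
      simp only [hΦ, Pi.add_apply, ← Finset.sum_add_distrib]
      exact Finset.sum_congr rfl fun i _ => by ring
    · intro c Q
      funext j
      simp only [hΦ, Pi.smul_apply, smul_eq_mul, Finset.mul_sum]
      exact Finset.sum_congr rfl fun i _ => by ring
  have hSconv : Convex ℝ S := Convex.is_linear_image (convex_pi fun i _ => K_convex) hlin
  have hScomp : IsCompact S := by
    refine (isCompact_univ_pi fun i => K_isCompact hmon hhom).image ?_
    exact continuous_pi fun j => continuous_finset_sum _ fun i _ =>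
      continuous_const.mul ((continuous_apply j).comp (continuous_apply i))
  obtain ⟨φ, u, hlt, hgt⟩ := geometric_hahn_banach_closed_point hSconv hScomp.isClosed hm
  set x : Fin n → ℝ := fun j => φ (fun k => if j = k then 1 else 0) with hx
  have hφ : ∀ y : Fin n → ℝ, φ y = ∑ j, y j * x j := by
    intro y
    have := LinearMap.pi_apply_eq_sum_univ (φ : (Fin n → ℝ) →ₗ[ℝ] ℝ) y
    simpa [smul_eq_mul] using this
  choose q hqK hqval using fun i => exists_mem_K (v := v) hconv hmon hhom x i
  have haS : Φ q ∈ S := ⟨q, fun i _ => hqK i, rfl⟩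
  have hcalc : φ (Φ q) = ∑ i, m i * Dder f v x i := by
    rw [hφ]
    calc ∑ j, (∑ i, m i * q i j) * x j
        = ∑ j, ∑ i, m i * (q i j * x j) := by
          refine Finset.sum_congr rfl fun j _ => ?_
          rw [Finset.sum_mul]
          exact Finset.sum_congr rfl fun i _ => by ring
      _ = ∑ i, ∑ j, m i * (q i j * x j) := Finset.sum_comm
      _ = ∑ i, m i * ∑ j, q i j * x j := by
          exact Finset.sum_congr rfl fun i _ => (Finset.mul_sum _ _ _).symm
      _ = ∑ i, m i * Dder f v x i := by
          exact Finset.sum_congr rfl fun i _ => by rw [hqval i]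
  have h1 : φ m ≤ φ (Φ q) := by
    rw [hφ, hcalc]
    exact hDin x
  have h2 := hlt _ haS
  linarith

lemma subdiff_stoch (hmon : Monotone f) (hhom : AddHomog f)
    {P : Matrix (Fin n) (Fin n) ℝ} (hP : P ∈ Subdiff f v) : IsStochMat P := by
  classical
  intro i
  constructor
  · intro j
    set x : Fin n → ℝ := fun k => v k - (if k = j then 1 else 0) with hxdef
    have hPx := hP x i
    have hxv : x - v = fun k => -(if k = j then 1 else 0) := by
      funext k
      simp [hxdef]
    have hmv : P.mulVec (x - v) i = -P i j := by
      rw [hxv]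
      simp [Matrix.mulVec, dotProduct, mul_ite]
    have hle : f x ≤ f v := by
      apply hmon
      intro k
      by_cases h : k = j <;> simp [hxdef, h]
    have := hle i
    rw [hmv] at hPx
    linarith
  · have key : ∀ c : ℝ, (∑ k, P i k) * c ≤ c := by
      intro c
      set x : Fin n → ℝ := fun k => c + v k with hxdef
      have hPx := hP x i
      have hxv : x - v = fun _ => c := by funext k; simp [hxdef]
      have hmv : P.mulVec (x - v) i = (∑ k, P i k) * c := by
        rw [hxv]
        simp [Matrix.mulVec, dotProduct, Finset.sum_mul]
      have hfx : f x i - f v i = c := by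
        have := congr_fun (hhom c v) i
        simp only [hxdef] at *
        rw [this]
        ring
      rw [hmv, hfx] at hPx
      exact hPx
    have k1 := key 1
    have k2 := key (-1)
    simp only [mul_one, mul_neg] at k1 k2
    linarith

lemma access_pos {P : Matrix (Fin n) (Fin n) ℝ} (hP : IsStochMat P) {m : Fin n → ℝ}
    (hm0 : ∀ i, 0 ≤ m i) (hinv : ∀ j, ∑ i, m i * P i j = m j) :
    ∀ i j, 0 < m i → MatAccess P i j → 0 < m j := by
  have step : ∀ a b, 0 < m a → P a b ≠ 0 → 0 < m b := by
    intro a b hma hab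
    have h1 : m a * P a b ≤ ∑ k, m k * P k b :=
      Finset.single_le_sum (fun k _ => mul_nonneg (hm0 k) ((hP k).1 b)) (Finset.mem_univ a)
    have h2 : 0 < m a * P a b :=
      mul_pos hma (lt_of_le_of_ne ((hP a).1 b) (Ne.symm hab))
    rw [hinv b] at h1
    linarith
  intro i j hmi hacc
  induction hacc with
  | refl => exact hmi
  | tail hsteps harc ih => exact step _ _ ih harc

lemma access_back {P : Matrix (Fin n) (Fin n) ℝ} (hP : IsStochMat P) {m : Fin n → ℝ}
    (hm0 : ∀ i, 0 ≤ m i) (hinv : ∀ j, ∑ i, m i * P i j = m j) :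
    ∀ i, 0 < m i → ∀ j, MatAccess P i j → MatAccess P j i := by
  classical
  intro i hmi
  set B : Finset (Fin n) := Finset.univ.filter (fun k => 0 < m k ∧ MatAccess P k i) with hB
  have hmemB : ∀ k, k ∈ B ↔ (0 < m k ∧ MatAccess P k i) := by
    intro k; simp [hB]
  have hiB : i ∈ B := (hmemB i).mpr ⟨hmi, Relation.ReflTransGen.refl⟩
  have h1 : ∑ b ∈ B, m b = ∑ a, m a * (∑ b ∈ B, P a b) := by
    calc ∑ b ∈ B, m b = ∑ b ∈ B, ∑ a, m a * P a b := by
          exact Finset.sum_congr rfl fun b _ => (hinv b).symm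
      _ = ∑ a, ∑ b ∈ B, m a * P a b := Finset.sum_comm
      _ = ∑ a, m a * (∑ b ∈ B, P a b) := by
          exact Finset.sum_congr rfl fun a _ => (Finset.mul_sum _ _ _).symm
  have hvanish : ∀ a ∈ Finset.univ, a ∉ B → m a * (∑ b ∈ B, P a b) = 0 := by
    intro a _ haB
    rcases eq_or_lt_of_le (hm0 a) with h | h
    · rw [← h, zero_mul]
    · have hz : ∀ b ∈ B, P a b = 0 := by
        intro b hbB
        by_contra hab
        apply haB
        obtain ⟨hmb, hacc⟩ := (hmemB b).mp hbB
        exact (hmemB a).mpr ⟨h, Relation.ReflTransGen.head hab hacc⟩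
      rw [Finset.sum_eq_zero hz, mul_zero]
  have h2 : ∑ b ∈ B, m b = ∑ a ∈ B, m a * (∑ b ∈ B, P a b) := by
    rw [h1, ← Finset.sum_subset (Finset.subset_univ B) hvanish]
  have hle : ∀ a ∈ B, m a * (∑ b ∈ B, P a b) ≤ m a := by
    intro a haB
    have hsub : ∑ b ∈ B, P a b ≤ ∑ b, P a b :=
      Finset.sum_le_sum_of_subset_of_nonneg (Finset.subset_univ B)
        (fun b _ _ => (hP a).1 b)
    rw [(hP a).2] at hsub
    calc m a * (∑ b ∈ B, P a b) ≤ m a * 1 :=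
          mul_le_mul_of_nonneg_left hsub (hm0 a)
      _ = m a := mul_one _
  have heach : ∀ a ∈ B, m a = m a * (∑ b ∈ B, P a b) :=
    fun a ha => ((Finset.sum_eq_sum_iff_of_le hle).mp h2.symm a ha).symm
  have hclosed : ∀ a ∈ B, ∀ b, P a b ≠ 0 → b ∈ B := by
    intro a haB b hab
    by_contra hbB
    obtain ⟨hma, hacc⟩ := (hmemB a).mp haB
    have hrow : ∑ c ∈ B, P a c = 1 := by
      have h3 := heach a haB
      have h4 : m a * 1 = m a * (∑ c ∈ B, P a c) := by rw [mul_one]; exact h3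
      exact (mul_left_cancel₀ (ne_of_gt hma) h4).symm
    have hsplit : ∑ c ∈ B, P a c + ∑ c ∈ Bᶜ, P a c = 1 := by
      rw [Finset.sum_add_sum_compl]
      exact (hP a).2
    have hzero : ∑ c ∈ Bᶜ, P a c = 0 := by linarith
    have : P a b = 0 := by
      have hnn : ∀ c ∈ Bᶜ, 0 ≤ P a c := fun c _ => (hP a).1 c
      exact (Finset.sum_eq_zero_iff_of_nonneg hnn).mp hzero b (Finset.mem_compl.mpr hbB)
    exact hab this
  intro j hacc
  have hjB : j ∈ B := by
    induction hacc with
    | refl => exact hiB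
    | tail hsteps harc ih => exact hclosed _ ih _ harc
  exact ((hmemB j).mp hjB).2


lemma class_measure {P : Matrix (Fin n) (Fin n) ℝ} (hP : IsStochMat P) {C : Set (Fin n)}
    (hC : IsFinalClass P C) :
    ∃ m : Fin n → ℝ, IsStochVec m ∧ (∀ i, 0 < m i ↔ i ∈ C) ∧ ∀ j, ∑ i, m i * P i j = m j := by
  classical
  obtain ⟨⟨i0, hCeq⟩, hfin⟩ := hC
  have hi0 : i0 ∈ C := by rw [hCeq]; exact ⟨Relation.ReflTransGen.refl, Relation.ReflTransGen.refl⟩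
  have noexit : ∀ i ∈ C, ∀ j, P i j ≠ 0 → j ∈ C := fun i hi j hij =>
    hfin i hi j (Relation.ReflTransGen.single hij)
  set Q : Matrix (Fin n) (Fin n) ℝ := Matrix.of (fun i j =>
    if i ∈ C then P i j else (if j = i0 then 1 else 0)) with hQdef
  have hQapp : ∀ i j, Q i j = if i ∈ C then P i j else (if j = i0 then 1 else 0) :=
    fun i j => rfl
  have hQnn : ∀ i j, 0 ≤ Q i j := by
    intro i j
    rw [hQapp]
    by_cases h : i ∈ C
    · simp only [h, if_true]; exact (hP i).1 j
    · simp only [h, if_false]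
      by_cases h2 : j = i0 <;> simp [h2]
  have hQrow : ∀ i, ∑ j, Q i j = 1 := by
    intro i
    by_cases h : i ∈ C
    · calc ∑ j, Q i j = ∑ j, P i j :=
            Finset.sum_congr rfl (fun j _ => by rw [hQapp]; simp [h])
        _ = 1 := (hP i).2
    · calc ∑ j, Q i j = ∑ j, if j = i0 then (1:ℝ) else 0 :=
            Finset.sum_congr rfl (fun j _ => by rw [hQapp]; simp [h])
        _ = 1 := by simp
  have hone : (fun _ : Fin n => (1:ℝ)) ≠ 0 := by
    intro h
    have := congr_fun h i0
    simp at this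
  have hdet : (Q - 1).det = 0 := by
    rw [← Matrix.exists_mulVec_eq_zero_iff]
    refine ⟨fun _ => 1, hone, ?_⟩
    funext i
    rw [Matrix.sub_mulVec, Matrix.one_mulVec]
    simp only [Pi.sub_apply, Pi.zero_apply]
    rw [show (Q.mulVec fun _ => 1) i = ∑ j, Q i j by
      simp [Matrix.mulVec, dotProduct]]
    rw [hQrow i]
    ring
  have hdetT : (Qᵀ - 1).det = 0 := by
    rw [show Qᵀ - 1 = (Q - 1)ᵀ by rw [Matrix.transpose_sub, Matrix.transpose_one]]
    rw [Matrix.det_transpose]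
    exact hdet
  obtain ⟨u, hu0, huQ⟩ := (Matrix.exists_mulVec_eq_zero_iff).mpr hdetT
  have hvec : ∀ j, ∑ i, u i * Q i j = u j := by
    intro j
    have h1 := congr_fun huQ j
    rw [Matrix.sub_mulVec, Matrix.one_mulVec] at h1
    simp only [Pi.sub_apply, Pi.zero_apply] at h1
    have h2 : (Qᵀ.mulVec u) j = ∑ i, u i * Q i j := by
      simp [Matrix.mulVec, dotProduct, Matrix.transpose_apply, mul_comm]
    linarith [h2 ▸ h1]
  set w : Fin n → ℝ := fun j => ∑ i, |u i| * Q i j with hwdef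
  have habs : ∀ j, |u j| ≤ w j := by
    intro j
    calc |u j| = |∑ i, u i * Q i j| := by rw [hvec j]
      _ ≤ ∑ i, |u i * Q i j| := Finset.abs_sum_le_sum_abs _ _
      _ = ∑ i, |u i| * Q i j := Finset.sum_congr rfl fun i _ => by
          rw [abs_mul, abs_of_nonneg (hQnn i j)]
  have hsum : ∑ j, w j = ∑ i, |u i| := by
    calc ∑ j, w j = ∑ i, ∑ j, |u i| * Q i j := Finset.sum_comm
      _ = ∑ i, |u i| * ∑ j, Q i j :=
          Finset.sum_congr rfl fun i _ => (Finset.mul_sum _ _ _).symm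
      _ = ∑ i, |u i| := Finset.sum_congr rfl fun i _ => by rw [hQrow i, mul_one]
  have heq : ∀ j, |u j| = w j := by
    have hz : ∑ j, (w j - |u j|) = 0 := by
      rw [Finset.sum_sub_distrib, hsum, sub_self]
    intro j
    have := (Finset.sum_eq_zero_iff_of_nonneg
      (fun k _ => sub_nonneg.mpr (habs k))).mp hz j (Finset.mem_univ j)
    linarith
  have houtside : ∀ j, j ∉ C → |u j| = 0 := by
    intro j hj
    rw [heq j, hwdef]
    apply Finset.sum_eq_zero
    intro i _
    rw [hQapp]
    by_cases h : i ∈ C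
    · simp only [h, if_true]
      have : P i j = 0 := by
        by_contra hne
        exact hj (noexit i h j hne)
      rw [this, mul_zero]
    · simp only [h, if_false]
      have : j ≠ i0 := fun hji => hj (hji ▸ hi0)
      simp [this]
  have hinvP : ∀ j, ∑ i, |u i| * P i j = |u j| := by
    intro j
    have h1 : ∑ i, |u i| * P i j = ∑ i, |u i| * Q i j := by
      refine Finset.sum_congr rfl fun i _ => ?_
      by_cases h : i ∈ C
      · rw [hQapp]; simp [h]
      · rw [houtside i h, zero_mul, zero_mul]
    rw [h1]
    exact (heq j).symm
  obtain ⟨t, hut⟩ := Function.ne_iff.mp hu0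
  have hutpos : 0 < |u t| := abs_pos.mpr (by simpa using hut)
  have htC : t ∈ C := by
    by_contra h
    rw [houtside t h] at hutpos
    exact lt_irrefl _ hutpos
  have hposC : ∀ j, j ∈ C → 0 < |u j| := by
    intro j hj
    have hacc : MatAccess P t j := by
      have h1 : MatAccess P t i0 := (hCeq ▸ htC).2
      have h2 : MatAccess P i0 j := (hCeq ▸ hj).1
      exact h1.trans h2
    exact access_pos hP (fun i => abs_nonneg (u i)) hinvP t j hutpos hacc
  set s : ℝ := ∑ i, |u i| with hsdef
  have hspos : 0 < s := by
    have h1 : |u t| ≤ s := Finset.single_le_sum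
      (fun i _ => abs_nonneg (u i)) (Finset.mem_univ t)
    linarith
  refine ⟨fun i => |u i| / s, ⟨fun i => div_nonneg (abs_nonneg _) hspos.le, ?_⟩, ?_, ?_⟩
  · rw [← Finset.sum_div, ← hsdef, div_self (ne_of_gt hspos)]
  · intro i
    constructor
    · intro h
      by_contra hiC
      have h' : 0 < |u i| / s := h
      rw [houtside i hiC] at h'
      simp at h'
    · intro h
      exact div_pos (hposC i h) hspos
  · intro j
    calc ∑ i, |u i| / s * P i j = (∑ i, |u i| * P i j) / s := by
          rw [Finset.sum_div]
          exact Finset.sum_congr rfl fun i _ => by ring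
      _ = |u j| / s := by rw [hinvP j]


lemma measure_Dder (hconv : IsConvexMap f) (hmon : Monotone f) (hhom : AddHomog f)
    (hv : f v = v) (m : Fin n → ℝ)
    (hineq : ∀ x, ∑ i, m i * x i ≤ ∑ i, m i * f x i) :
    ∀ x, ∑ i, m i * x i ≤ ∑ i, m i * Dder f v x i := by
  intro x
  have htend : Tendsto (fun ε => ∑ i, m i * sl f v x i ε) (nhdsWithin 0 (Set.Ioi 0))
      (nhds (∑ i, m i * Dder f v x i)) :=
    tendsto_finset_sum _ (fun i _ => (tendsto_sl hconv hmon hhom).const_mul _)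
  refine ge_of_tendsto htend ?_
  filter_upwards [self_mem_nhdsWithin] with ε (hε : (0:ℝ) < ε)
  have h1 := hineq (v + ε • x)
  have e1 : ∑ i, m i * sl f v x i ε
      = ((∑ i, m i * f (v + ε • x) i) - ∑ i, m i * v i) / ε := by
    calc ∑ i, m i * sl f v x i ε
        = ∑ i, (m i * f (v + ε • x) i - m i * v i) / ε := by
          refine Finset.sum_congr rfl fun i _ => ?_
          rw [sl, hv]
          ring
      _ = (∑ i, (m i * f (v + ε • x) i - m i * v i)) / ε := (Finset.sum_div _ _ _).symm
      _ = ((∑ i, m i * f (v + ε • x) i) - ∑ i, m i * v i) / ε := by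
          rw [Finset.sum_sub_distrib]
  have e2 : ∑ i, m i * (v + ε • x) i = ∑ i, m i * v i + ε * ∑ i, m i * x i := by
    rw [Finset.mul_sum, ← Finset.sum_add_distrib]
    refine Finset.sum_congr rfl fun i _ => ?_
    simp only [Pi.add_apply, Pi.smul_apply, smul_eq_mul]
    ring
  rw [e2] at h1
  rw [e1, le_div_iff₀ hε]
  nlinarith [h1]

lemma Dder_measure (hmon : Monotone f) (hhom : AddHomog f)
    (hv : f v = v) (m : Fin n → ℝ) (hm0 : ∀ i, 0 ≤ m i)
    (hineq : ∀ x, ∑ i, m i * x i ≤ ∑ i, m i * Dder f v x i) :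
    ∀ x, ∑ i, m i * x i ≤ ∑ i, m i * f x i := by
  intro x
  have h1 := hineq (x - v)
  have h2 : ∀ i, Dder f v (x - v) i ≤ f x i - f v i := by
    intro i
    have := Dder_le (f := f) (v := v) (x := x - v) (i := i) hmon hhom
    rwa [add_sub_cancel] at this
  have h3 : ∑ i, m i * Dder f v (x - v) i ≤ ∑ i, m i * (f x i - f v i) :=
    Finset.sum_le_sum fun i _ => mul_le_mul_of_nonneg_left (h2 i) (hm0 i)
  have e1 : ∑ i, m i * (x - v) i = ∑ i, m i * x i - ∑ i, m i * v i := by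
    rw [← Finset.sum_sub_distrib]
    refine Finset.sum_congr rfl fun i _ => ?_
    simp only [Pi.sub_apply]
    ring
  have e2 : ∑ i, m i * (f x i - f v i) = ∑ i, m i * f x i - ∑ i, m i * v i := by
    rw [← Finset.sum_sub_distrib]
    refine Finset.sum_congr rfl fun i _ => ?_
    rw [hv]
    ring
  rw [e1] at h1
  rw [e2] at h3
  linarith

lemma class_to_measure (hmon : Monotone f) (hhom : AddHomog f) (hv : f v = v)
    {C : Set (Fin n)} (hCS : C ∈ finalClassesSet (Subdiff f v)) :
    ∃ mc : Fin n → ℝ, IsStochVec mc ∧ (∀ i, 0 < mc i ↔ i ∈ C) ∧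
      ∀ x, ∑ i, mc i * x i ≤ ∑ i, mc i * f x i := by
  obtain ⟨P, hPsub, hPC⟩ := hCS
  have hPst := subdiff_stoch hmon hhom hPsub
  obtain ⟨mc, hst, hsupp, hinvc⟩ := class_measure hPst hPC
  refine ⟨mc, hst, hsupp, ?_⟩
  intro x
  have h2 : ∑ i, mc i * P.mulVec (x - v) i ≤ ∑ i, mc i * (f x i - f v i) :=
    Finset.sum_le_sum fun i _ => mul_le_mul_of_nonneg_left (hPsub x i) (hst.1 i)
  have h3 : ∑ i, mc i * P.mulVec (x - v) i = ∑ j, mc j * (x j - v j) := by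
    calc ∑ i, mc i * P.mulVec (x - v) i
        = ∑ i, ∑ j, mc i * (P i j * (x j - v j)) := by
          refine Finset.sum_congr rfl fun i _ => ?_
          rw [Matrix.mulVec, dotProduct, Finset.mul_sum]
          simp only [Pi.sub_apply]
      _ = ∑ j, ∑ i, mc i * (P i j * (x j - v j)) := Finset.sum_comm
      _ = ∑ j, (∑ i, mc i * P i j) * (x j - v j) := by
          refine Finset.sum_congr rfl fun j _ => ?_
          rw [Finset.sum_mul]
          exact Finset.sum_congr rfl fun i _ => by ring
      _ = ∑ j, mc j * (x j - v j) := by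
          exact Finset.sum_congr rfl fun j _ => by rw [hinvc j]
  have e1 : ∑ j, mc j * (x j - v j) = ∑ j, mc j * x j - ∑ j, mc j * v j := by
    rw [← Finset.sum_sub_distrib]
    exact Finset.sum_congr rfl fun j _ => by ring
  have e2 : ∑ i, mc i * (f x i - f v i) = ∑ i, mc i * f x i - ∑ i, mc i * v i := by
    rw [← Finset.sum_sub_distrib]
    refine Finset.sum_congr rfl fun i _ => ?_
    rw [hv]
    ring
  rw [h3, e1] at h2
  rw [e2] at h2
  linarith

lemma classes_to_measure (hmon : Monotone f) (hhom : AddHomog f) (hv : f v = v)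
    {S : Set (Set (Fin n))} (hS : ∀ C ∈ S, C ∈ finalClassesSet (Subdiff f v))
    (hne : (⋃₀ S).Nonempty) :
    ∃ m : Fin n → ℝ, IsStochVec m ∧ (∀ i, 0 < m i ↔ i ∈ ⋃₀ S) ∧
      ∀ x, ∑ i, m i * x i ≤ ∑ i, m i * f x i := by
  classical
  have hμ : ∀ C ∈ S, ∃ mc : Fin n → ℝ, IsStochVec mc ∧ (∀ i, 0 < mc i ↔ i ∈ C) ∧
      ∀ x, ∑ i, mc i * x i ≤ ∑ i, mc i * f x i :=
    fun C hCS => class_to_measure hmon hhom hv (hS C hCS)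
  choose! μ hμ1 hμ2 hμ3 using hμ
  have hfin : S.Finite := Set.toFinite S
  set T := hfin.toFinset with hT
  have hTmem : ∀ C, C ∈ T ↔ C ∈ S := fun C => hfin.mem_toFinset
  have hTne : T.Nonempty := by
    obtain ⟨i, C, hCS, hiC⟩ := hne
    exact ⟨C, (hTmem C).mpr hCS⟩
  set k : ℝ := (T.card : ℝ) with hk
  have hkpos : 0 < k := by
    rw [hk]
    exact_mod_cast Finset.card_pos.mpr hTne
  refine ⟨fun i => (∑ C ∈ T, μ C i) / k, ⟨?_, ?_⟩, ?_, ?_⟩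
  · intro i
    exact div_nonneg (Finset.sum_nonneg fun C hC => (hμ1 C ((hTmem C).mp hC)).1 i) hkpos.le
  · rw [← Finset.sum_div]
    rw [Finset.sum_comm]
    have : ∑ C ∈ T, ∑ i, μ C i = ∑ C ∈ T, 1 :=
      Finset.sum_congr rfl fun C hC => (hμ1 C ((hTmem C).mp hC)).2
    rw [this, Finset.sum_const, nsmul_eq_mul, mul_one, ← hk, div_self (ne_of_gt hkpos)]
  · intro i
    constructor
    · intro h
      have hpos : 0 < ∑ C ∈ T, μ C i := by
        by_contra hnp
        push_neg at hnp
        have hz : ∑ C ∈ T, μ C i = 0 := le_antisymm hnp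
          (Finset.sum_nonneg fun C hC => (hμ1 C ((hTmem C).mp hC)).1 i)
        have h' : (0:ℝ) < (∑ C ∈ T, μ C i) / k := h
        rw [hz] at h'
        simp at h'
      obtain ⟨C, hCT, hCpos⟩ : ∃ C ∈ T, 0 < μ C i := by
        by_contra hall
        push_neg at hall
        have : ∑ C ∈ T, μ C i = 0 := Finset.sum_eq_zero
          (fun C hC => le_antisymm (hall C hC) ((hμ1 C ((hTmem C).mp hC)).1 i))
        rw [this] at hpos
        exact lt_irrefl _ hpos
      exact Set.mem_sUnion.mpr ⟨C, (hTmem C).mp hCT,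
        (hμ2 C ((hTmem C).mp hCT) i).mp hCpos⟩
    · intro h
      obtain ⟨C, hCS, hiC⟩ := Set.mem_sUnion.mp h
      have hCT : C ∈ T := (hTmem C).mpr hCS
      have hpos : 0 < μ C i := (hμ2 C hCS i).mpr hiC
      have hle : μ C i ≤ ∑ C ∈ T, μ C i := Finset.single_le_sum
        (fun D hD => (hμ1 D ((hTmem D).mp hD)).1 i) hCT
      exact div_pos (lt_of_lt_of_le hpos hle) hkpos
  · intro x
    have key : ∀ y : Fin n → ℝ, ∑ i, ((∑ C ∈ T, μ C i) / k) * y i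
        = (∑ C ∈ T, ∑ i, μ C i * y i) / k := by
      intro y
      calc ∑ i, ((∑ C ∈ T, μ C i) / k) * y i
          = ∑ i, (∑ C ∈ T, μ C i * y i) / k := by
            refine Finset.sum_congr rfl fun i _ => ?_
            rw [div_mul_eq_mul_div, Finset.sum_mul]
        _ = (∑ i, ∑ C ∈ T, μ C i * y i) / k := (Finset.sum_div _ _ _).symm
        _ = (∑ C ∈ T, ∑ i, μ C i * y i) / k := by rw [Finset.sum_comm]
    rw [key x, key (fun i => f x i)]
    have hsum : ∑ C ∈ T, ∑ i, μ C i * x i ≤ ∑ C ∈ T, ∑ i, μ C i * f x i :=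
      Finset.sum_le_sum fun C hC => hμ3 C ((hTmem C).mp hC) x
    gcongr


lemma measure_to_classes (hconv : IsConvexMap f) (hmon : Monotone f) (hhom : AddHomog f)
    (hv : f v = v) {F : Set (Fin n)} (m : Fin n → ℝ) (hm : IsStochVec m)
    (hsupp : ∀ i, 0 < m i ↔ i ∈ F)
    (hineq : ∀ x, ∑ i, m i * x i ≤ ∑ i, m i * f x i) :
    ∃ S : Set (Set (Fin n)), (∀ C ∈ S, C ∈ finalClassesSet (Subdiff f v)) ∧ F = ⋃₀ S := by
  have hDin := measure_Dder hconv hmon hhom hv m hineq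
  obtain ⟨Q, hQK, hQinv⟩ := exists_matrix hconv hmon hhom m hDin
  have hQsub : Q ∈ Subdiff f v := by
    intro x i
    have h := K_subgrad hmon hhom (hQK i) (x - v)
    rw [add_sub_cancel] at h
    have heq : Q.mulVec (x - v) i = ∑ j, Q i j * (x - v) j := rfl
    rw [heq]
    exact le_trans (le_of_eq (Finset.sum_congr rfl fun j _ => by
      simp only [Pi.sub_apply])) h
  have hQst := subdiff_stoch hmon hhom hQsub
  refine ⟨{C | IsFinalClass Q C ∧ C ⊆ F}, ?_, ?_⟩
  · rintro C ⟨h1, -⟩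
    exact ⟨Q, hQsub, h1⟩
  · apply Set.Subset.antisymm
    · intro i hiF
      have hmi : 0 < m i := (hsupp i).mpr hiF
      refine Set.mem_sUnion.mpr ⟨{j | MatAccess Q i j ∧ MatAccess Q j i}, ⟨⟨⟨i, rfl⟩, ?_⟩, ?_⟩,
        ⟨Relation.ReflTransGen.refl, Relation.ReflTransGen.refl⟩⟩
      · rintro a ⟨hia, hai⟩ b hab
        have hib : MatAccess Q i b := hia.trans hab
        exact ⟨hib, access_back hQst hm.1 hQinv i hmi b hib⟩
      · rintro a ⟨hia, -⟩
        exact (hsupp a).mp (access_pos hQst hm.1 hQinv i a hmi hia)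
    · rintro i ⟨C, ⟨-, hCF⟩, hiC⟩
      exact hCF hiC

end Stmt13Aux

end Stmt13AuxSec

open Stmt13Aux

/-- characterization of unions of critical classes in terms of nonlinear
"excessive" stochastic measures, for `f` itself and for its directional derivative at
the fixed point `v`. -/
theorem stmt13 (n : ℕ) (hn : 1 ≤ n) (f : (Fin n → ℝ) → (Fin n → ℝ))
    (hconv : IsConvexMap f) (hmon : Monotone f) (hhom : AddHomog f)
    (v : Fin n → ℝ) (hv : f v = v) (F : Set (Fin n)) (hF : F.Nonempty) :
    -- (1) ↔ (2)
    ((∃ S : Set (Set (Fin n)), (∀ C ∈ S, C ∈ finalClassesSet (Subdiff f v)) ∧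
        F = ⋃₀ S) ↔
      (∃ m : Fin n → ℝ, IsStochVec m ∧ (∀ i, 0 < m i ↔ i ∈ F) ∧
        ∀ x, ∑ i, m i * x i ≤ ∑ i, m i * f x i)) ∧
    -- (2) ↔ (3)
    ((∃ m : Fin n → ℝ, IsStochVec m ∧ (∀ i, 0 < m i ↔ i ∈ F) ∧
        ∀ x, ∑ i, m i * x i ≤ ∑ i, m i * f x i) ↔
      (∃ D : (Fin n → ℝ) → (Fin n → ℝ),
        (∀ x i, Filter.Tendsto (fun ε : ℝ => (f (v + ε • x) i - f v i) / ε)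
          (nhdsWithin 0 (Set.Ioi 0)) (nhds (D x i))) ∧
        ∃ m : Fin n → ℝ, IsStochVec m ∧ (∀ i, 0 < m i ↔ i ∈ F) ∧
          ∀ x, ∑ i, m i * x i ≤ ∑ i, m i * D x i)) := by
  constructor
  · constructor
    · rintro ⟨S, hS, hFS⟩
      have hne : (⋃₀ S).Nonempty := hFS ▸ hF
      obtain ⟨m, h1, h2, h3⟩ := classes_to_measure hmon hhom hv hS hne
      exact ⟨m, h1, fun i => hFS ▸ h2 i, h3⟩
    · rintro ⟨m, hm, hsupp, hineq⟩
      exact measure_to_classes hconv hmon hhom hv m hm hsupp hineq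
  · constructor
    · rintro ⟨m, hm, hsupp, hineq⟩
      refine ⟨fun x i => Dder f v x i, fun x i => tendsto_sl hconv hmon hhom, m, hm, hsupp, ?_⟩
      exact measure_Dder hconv hmon hhom hv m hineq
    · rintro ⟨D, hD, m, hm, hsupp, hineq⟩
      have hDeq : ∀ x i, D x i = Dder f v x i := fun x i =>
        tendsto_nhds_unique (hD x i) (tendsto_sl hconv hmon hhom)
      refine ⟨m, hm, hsupp, ?_⟩
      apply Dder_measure hmon hhom hv m hm.1
      intro x
      have := hineq x
      calc ∑ i, m i * x i ≤ ∑ i, m i * D x i := this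
        _ = ∑ i, m i * Dder f v x i :=
          Finset.sum_congr rfl fun i _ => by rw [hDeq x i]
end

section
/- Let f : ℝ^n → ℝ^n be convex, monotone, and additively homogeneous, with eigenvector v. Then there exists a critical class F of f that is invariant by every matrix P ∈ ∂f(v), i.e. P_{ij} = 0 for all P ∈ ∂f(v), i ∈ F, and j ∉ F. -/
open Matrix Filter

/-- Existence of a subgradient of a convex function on `ℝ^n`. -/
lemma exists_subgrad {n : ℕ} (g : (Fin n → ℝ) → ℝ) (hg : ConvexOn ℝ Set.univ g)
    (v : Fin n → ℝ) :
    ∃ p : Fin n → ℝ, ∀ x, ∑ k, p k * (x k - v k) ≤ g x - g v := by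
  have hcont : Continuous g := by
    rw [← continuousOn_univ]
    exact hg.continuousOn isOpen_univ
  set s : Set ((Fin n → ℝ) × ℝ) := {p | g p.1 < p.2} with hs
  have hsconv : Convex ℝ s := by
    have h := hg.convex_strict_epigraph
    have : {p : (Fin n → ℝ) × ℝ | p.1 ∈ Set.univ ∧ g p.1 < p.2} = s := by
      ext p; simp [hs]
    rwa [this] at h
  have hsopen : IsOpen s := isOpen_lt (hcont.comp continuous_fst) continuous_snd
  have hnot : (v, g v) ∉ s := by simp [hs]
  obtain ⟨φ, hφ⟩ := geometric_hahn_banach_open_point hsconv hsopen hnot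
  set β := φ (0, 1) with hβdef
  have hsplit : ∀ (x : Fin n → ℝ) (y : ℝ), φ (x, y) = φ (x, 0) + y * β := by
    intro x y
    have hxy : (x, y) = (x, (0 : ℝ)) + y • ((0 : Fin n → ℝ), (1 : ℝ)) := by
      simp [Prod.ext_iff]
    rw [hxy, map_add, φ.map_smul, smul_eq_mul]
  have hβ : β < 0 := by
    have h1 := hφ (v, g v + 1) (by simp [hs])
    rw [hsplit v (g v + 1), hsplit v (g v)] at h1
    linarith
  have key : ∀ x, φ (x, 0) + g x * β ≤ φ (v, 0) + g v * β := by
    intro x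
    have h2 : ∀ ε : ℝ, 0 < ε → φ (x, 0) + (g x + ε) * β < φ (v, 0) + g v * β := by
      intro ε hε
      have h := hφ (x, g x + ε) (by simp [hs, hε])
      rwa [hsplit, hsplit v (g v)] at h
    refine le_of_forall_pos_lt_add fun ε hε => ?_
    have hβ0 : β ≠ 0 := ne_of_lt hβ
    have hε' : 0 < ε / (-β) := div_pos hε (by linarith)
    have h3 := h2 _ hε'
    have hb : (ε / (-β)) * β = -ε := by
      rw [div_mul_eq_mul_div, mul_div_assoc, div_neg, div_self hβ0]
      ring
    nlinarith
  refine ⟨fun k => φ ((fun j => if k = j then 1 else 0 : Fin n → ℝ), 0) / (-β), fun x => ?_⟩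
  set ψ : (Fin n → ℝ) →ₗ[ℝ] ℝ :=
    φ.toLinearMap.comp (LinearMap.inl ℝ (Fin n → ℝ) ℝ) with hψdef
  have hψ : ∀ z : Fin n → ℝ, ψ z = φ (z, 0) := fun z => rfl
  have hsum : ∑ k, φ ((fun j => if k = j then 1 else 0 : Fin n → ℝ), 0) / (-β) * (x k - v k)
      = ψ (x - v) / (-β) := by
    rw [LinearMap.pi_apply_eq_sum_univ ψ (x - v), Finset.sum_div]
    refine Finset.sum_congr rfl fun k _ => ?_
    rw [hψ]
    simp [Pi.sub_apply, smul_eq_mul]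
    ring
  rw [hsum]
  have h4 := key x
  rw [← hψ x, ← hψ v] at h4
  have h5 : ψ (x - v) ≤ (-β) * (g x - g v) := by
    rw [map_sub]; nlinarith
  rw [div_le_iff₀ (by linarith : (0:ℝ) < -β)]
  linarith [h5]

/-- The subdifferential of a convex map is nonempty. -/
lemma subdiff_nonempty {n : ℕ} (f : (Fin n → ℝ) → (Fin n → ℝ)) (hconv : IsConvexMap f)
    (v : Fin n → ℝ) : (Subdiff f v).Nonempty := by
  choose p hp using fun i => exists_subgrad (fun x => f x i) (hconv i) v
  refine ⟨Matrix.of p, fun x i => ?_⟩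
  simpa [Matrix.mulVec, dotProduct, Pi.sub_apply] using hp i x

lemma subdiff_nonneg {n : ℕ} {f : (Fin n → ℝ) → (Fin n → ℝ)} (hmon : Monotone f)
    {v : Fin n → ℝ} {P : Matrix (Fin n) (Fin n) ℝ} (hP : P ∈ Subdiff f v) (i j : Fin n) :
    0 ≤ P i j := by
  classical
  set x : Fin n → ℝ := fun k => if k = j then v k - 1 else v k with hx
  have hxv : x ≤ v := fun k => by by_cases h : k = j <;> simp [hx, h]
  have h1 := hP x i
  have hterm : ∀ k, P i k * (x k - v k) = if k = j then -P i j else 0 := by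
    intro k; by_cases h : k = j <;> simp [hx, h]
  have hmv : P.mulVec (x - v) i = -P i j := by
    simp only [Matrix.mulVec, dotProduct, Pi.sub_apply]
    rw [Finset.sum_congr rfl fun k _ => hterm k]
    simp
  have h2 : f x i ≤ f v i := hmon hxv i
  rw [hmv] at h1
  linarith

lemma subdiff_rowsum {n : ℕ} {f : (Fin n → ℝ) → (Fin n → ℝ)} (hhom : AddHomog f)
    {v : Fin n → ℝ} {P : Matrix (Fin n) (Fin n) ℝ} (hP : P ∈ Subdiff f v) (i : Fin n) :
    ∑ j, P i j = 1 := by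
  have key : ∀ c : ℝ, (∑ j, P i j) * c ≤ c := by
    intro c
    have h := hP (fun k => c + v k) i
    rw [hhom c v] at h
    have hsub : ((fun k => c + v k) - v) = fun _ => c := by ext k; simp
    rw [hsub] at h
    simpa [Matrix.mulVec, dotProduct, Finset.sum_mul] using h
  have h1 := key 1
  have h2 := key (-1)
  linarith

/-- Every matrix has a final class. -/
lemma exists_finalClass {n : ℕ} (hn : 1 ≤ n) (P : Matrix (Fin n) (Fin n) ℝ) :
    ∃ C, IsFinalClass P C := by
  classical
  set acc : Fin n → Finset (Fin n) := fun i => Finset.univ.filter (fun j => MatAccess P i j)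
    with hacc
  obtain ⟨i0, -, hmin⟩ := Finset.exists_min_image (Finset.univ : Finset (Fin n))
    (fun i => (acc i).card) ⟨⟨0, hn⟩, Finset.mem_univ _⟩
  refine ⟨{j | MatAccess P i0 j ∧ MatAccess P j i0}, ⟨i0, rfl⟩, ?_⟩
  rintro i ⟨h1, h2⟩ j hij
  have hj : MatAccess P i0 j := h1.trans hij
  refine ⟨hj, ?_⟩
  have hsub : acc j ⊆ acc i0 := by
    intro k hk
    simp only [hacc, Finset.mem_filter, Finset.mem_univ, true_and] at hk ⊢
    exact hj.trans hk
  have hcard : (acc i0).card ≤ (acc j).card := hmin j (Finset.mem_univ _)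
  have heq : acc j = acc i0 := Finset.eq_of_subset_of_card_le hsub hcard
  have hi0 : i0 ∈ acc i0 := by
    simp only [hacc, Finset.mem_filter, Finset.mem_univ, true_and]
    exact Relation.ReflTransGen.refl
  rw [← heq] at hi0
  simpa only [hacc, Finset.mem_filter, Finset.mem_univ, true_and] using hi0

/-- there exists a critical class of `f` that is invariant by every
matrix in the subdifferential at the eigenvector `v`. -/
theorem stmt14 (n : ℕ) (hn : 1 ≤ n) (f : (Fin n → ℝ) → (Fin n → ℝ))
    (hconv : IsConvexMap f) (hmon : Monotone f) (hhom : AddHomog f)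
    (v : Fin n → ℝ) (lam : ℝ) (hv : f v = fun i => lam + v i) :
    ∃ F, IsGraphClass (finalGraphSet (Subdiff f v)) F ∧
      ∀ P ∈ Subdiff f v, ∀ i ∈ F, ∀ j ∉ F, P i j = 0 := by
  classical
  have hne : (Subdiff f v).Nonempty := subdiff_nonempty f hconv v
  set supp : Matrix (Fin n) (Fin n) ℝ → Finset (Fin n × Fin n) :=
    fun P => Finset.univ.filter (fun q => P q.1 q.2 ≠ 0) with hsuppdef
  set K : Set ℕ := (fun P => (supp P).card) '' (Subdiff f v) with hK
  have hKne : K.Nonempty := hne.image _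
  have hKbdd : BddAbove K := by
    refine ⟨(Finset.univ : Finset (Fin n × Fin n)).card, ?_⟩
    rintro k ⟨P, -, rfl⟩
    exact Finset.card_le_card (Finset.filter_subset _ _)
  obtain ⟨P0, hP0S, hP0card⟩ := Nat.sSup_mem hKne hKbdd
  -- maximality of support of P0
  have hsupp : ∀ Q ∈ Subdiff f v, ∀ i j, Q i j ≠ 0 → P0 i j ≠ 0 := by
    intro Q hQ i j hQij
    set M : Matrix (Fin n) (Fin n) ℝ := (1/2 : ℝ) • (P0 + Q) with hM
    have hMS : M ∈ Subdiff f v := by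
      intro x k
      have h1 := hP0S x k
      have h2 := hQ x k
      have hmv : M.mulVec (x - v) k
          = (1/2) * (P0.mulVec (x - v) k + Q.mulVec (x - v) k) := by
        simp [hM, Matrix.smul_mulVec, Matrix.add_mulVec, smul_eq_mul]
        ring
      rw [hmv]; linarith
    have hMnn : ∀ a b, (0:ℝ) ≤ M a b → True := fun _ _ _ => trivial
    have hsubM : supp P0 ⊆ supp M := by
      intro q hq
      simp only [hsuppdef, Finset.mem_filter, Finset.mem_univ, true_and] at hq ⊢
      have h1 := subdiff_nonneg hmon hP0S q.1 q.2
      have h2 := subdiff_nonneg hmon hQ q.1 q.2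
      have : (0:ℝ) < P0 q.1 q.2 := lt_of_le_of_ne h1 (Ne.symm hq)
      have hMpos : (0:ℝ) < M q.1 q.2 := by
        simp only [hM, Matrix.smul_apply, Matrix.add_apply, smul_eq_mul]
        linarith
      exact ne_of_gt hMpos
    have hP0card' : (supp P0).card = sSup K := hP0card
    have hcardM : (supp M).card ≤ (supp P0).card := by
      rw [hP0card']
      exact le_csSup hKbdd ⟨M, hMS, rfl⟩
    have heq : supp M = supp P0 := (Finset.eq_of_subset_of_card_le hsubM hcardM).symm
    have hqM : (i, j) ∈ supp M := by
      simp only [hsuppdef, Finset.mem_filter, Finset.mem_univ, true_and]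
      have h1 := subdiff_nonneg hmon hP0S i j
      have h2 := subdiff_nonneg hmon hQ i j
      have : (0:ℝ) < Q i j := lt_of_le_of_ne h2 (Ne.symm hQij)
      have hMpos : (0:ℝ) < M i j := by
        simp only [hM, Matrix.smul_apply, Matrix.add_apply, smul_eq_mul]
        linarith
      exact ne_of_gt hMpos
    rw [heq] at hqM
    simpa only [hsuppdef, Finset.mem_filter, Finset.mem_univ, true_and] using hqM
  -- the critical graph
  set G : Fin n → Fin n → Prop := finalGraphSet (Subdiff f v) with hG
  have hGP0 : ∀ i j, G i j → P0 i j ≠ 0 := by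
    rintro i j ⟨Q, hQ, C, hC, hiC, hjC, hQij⟩
    exact hsupp Q hQ i j hQij
  have hGacc : ∀ i j, GAccess G i j → MatAccess P0 i j := fun i j h =>
    Relation.ReflTransGen.mono hGP0 i j h
  -- a final class of P0
  obtain ⟨F, hF⟩ := exists_finalClass hn P0
  obtain ⟨i0, hFeq⟩ := hF.1
  have hi0F : i0 ∈ F := by
    rw [hFeq]; exact ⟨Relation.ReflTransGen.refl, Relation.ReflTransGen.refl⟩
  -- access within F lifts to the critical graph
  have haccG : ∀ i, i ∈ F → ∀ j, MatAccess P0 i j → GAccess G i j := by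
    intro i hiF j hij
    induction hij with
    | refl => exact Relation.ReflTransGen.refl
    | @tail b c hab hbc ih =>
      have hbF : b ∈ F := hF.2 i hiF b hab
      have hcF : c ∈ F := hF.2 i hiF c (hab.tail hbc)
      exact ih.tail ⟨P0, hP0S, F, hF, hbF, hcF, hbc⟩
  have hclass : F = {j | GAccess G i0 j ∧ GAccess G j i0} := by
    ext j
    constructor
    · intro hjF
      have h1 : MatAccess P0 i0 j := (hFeq ▸ hjF).1
      have h2 : MatAccess P0 j i0 := (hFeq ▸ hjF).2
      exact ⟨haccG i0 hi0F j h1, haccG j hjF i0 h2⟩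
    · rintro ⟨h1, h2⟩
      rw [hFeq]
      exact ⟨hGacc _ _ h1, hGacc _ _ h2⟩
  -- an arc inside F
  have hrow := subdiff_rowsum hhom hP0S i0
  have hex : ∃ j, P0 i0 j ≠ 0 := by
    by_contra h
    push_neg at h
    simp [h] at hrow
  obtain ⟨j0, hj0⟩ := hex
  have hj0F : j0 ∈ F := hF.2 i0 hi0F j0 (Relation.ReflTransGen.single hj0)
  have harc : G i0 j0 := ⟨P0, hP0S, F, hF, hi0F, hj0F, hj0⟩
  refine ⟨F, ⟨⟨i0, hclass⟩, i0, hi0F, j0, hj0F, harc⟩, ?_⟩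
  intro Q hQ i hiF j hjF
  by_contra hQij
  exact hjF (hF.2 i hiF j (Relation.ReflTransGen.single (hsupp Q hQ i j hQij)))
end

section
/- Let f : ℝ^n → ℝ^n be monotone and additively homogeneous. If f has a periodic orbit, i.e. there exist x ∈ ℝ^n and k ≥ 1 with f^k(x) = x, then f has a fixed point. -/
open Matrix Filter

/-- a monotone additively homogeneous map with a periodic orbit has a
fixed point. -/
theorem stmt15 (n : ℕ) (hn : 1 ≤ n) (f : (Fin n → ℝ) → (Fin n → ℝ))
    (hmon : Monotone f) (hhom : AddHomog f)
    (x : Fin n → ℝ) (k : ℕ) (hk : 1 ≤ k) (hx : f^[k] x = x) :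
    ∃ v, f v = v := by
  classical
  -- iterated homogeneity
  have hhom' : ∀ (m : ℕ) (c : ℝ) (z : Fin n → ℝ),
      f^[m] (fun i => c + z i) = fun i => c + f^[m] z i := by
    intro m
    induction m with
    | zero => intro c z; simp
    | succ m ih =>
      intro c z
      rw [Function.iterate_succ_apply, hhom, ih]
      funext i
      rw [Function.iterate_succ_apply]
  have hmon' : ∀ m, Monotone f^[m] := fun m => hmon.iterate m
  -- f is sup-norm nonexpansive
  have key : ∀ a b : Fin n → ℝ, ∀ i, f a i ≤ dist a b + f b i := by
    intro a b i
    have hle : a ≤ fun j => dist a b + b j := by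
      intro j
      have h1 : dist (a j) (b j) ≤ dist a b := dist_le_pi_dist a b j
      have h2 : a j - b j ≤ dist (a j) (b j) := by
        rw [Real.dist_eq]; exact le_abs_self _
      simp only
      linarith
    calc f a i ≤ f (fun j => dist a b + b j) i := hmon hle i
      _ = dist a b + f b i := by rw [hhom]
  have lip : LipschitzWith 1 f := by
    apply LipschitzWith.of_dist_le_mul
    intro a b
    rw [NNReal.coe_one, one_mul]
    rw [dist_pi_le_iff dist_nonneg]
    intro i
    rw [Real.dist_eq, abs_sub_le_iff]
    constructor
    · have := key a b i; linarith
    · have := key b a i; rw [dist_comm] at this; linarith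
  -- periodicity of the orbit
  have hperiod : ∀ m : ℕ, f^[m] x = f^[m % k] x := by
    intro m
    conv_lhs => rw [← Nat.mod_add_div m k]
    rw [Function.iterate_add_apply, Function.iterate_mul,
      Function.iterate_fixed hx]
  have hne : (Finset.range k).Nonempty := ⟨0, Finset.mem_range.mpr hk⟩
  set y : Fin n → ℝ := fun i => (Finset.range k).sup' hne (fun j => f^[j] x i) with hy
  have hjy : ∀ j < k, f^[j] x ≤ y := by
    intro j hj i
    exact Finset.le_sup' (fun j => f^[j] x i) (Finset.mem_range.mpr hj)
  have hfy : y ≤ f y := by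
    intro i
    apply Finset.sup'_le
    intro j hj
    rw [Finset.mem_range] at hj
    obtain ⟨j', hj', hjj'⟩ : ∃ j' < k, f^[j] x = f (f^[j'] x) := by
      rcases Nat.eq_zero_or_pos j with h0 | h0
      · refine ⟨k - 1, by omega, ?_⟩
        have hkk : f^[k] x = f (f^[k-1] x) := by
          conv_lhs => rw [show k = k-1+1 from by omega]
          rw [Function.iterate_succ_apply']
        rw [h0, Function.iterate_zero_apply, ← hkk, hx]
      · exact ⟨j - 1, by omega, by
          rw [← Function.iterate_succ_apply' f (j-1) x]
          congr 1; omega⟩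
    rw [hjj']
    exact hmon (hjy j' hj') i
  -- iterates of y are monotone and bounded
  have hseqmono : Monotone (fun m => f^[m] y) := by
    apply monotone_nat_of_le_succ
    intro m
    rw [Function.iterate_succ_apply']
    calc f^[m] y ≤ f^[m] (f y) := hmon' m hfy
      _ = f (f^[m] y) := by rw [← Function.iterate_succ_apply, Function.iterate_succ_apply']
  set c : ℝ := dist y x with hc
  have hbd : ∀ m : ℕ, ∀ i, f^[m] y i ≤ c + y i := by
    intro m i
    have hyx : y ≤ fun j => c + x j := by
      intro j
      have h1 : dist (y j) (x j) ≤ dist y x := dist_le_pi_dist y x j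
      have h2 : y j - x j ≤ dist (y j) (x j) := by
        rw [Real.dist_eq]; exact le_abs_self _
      simp only
      linarith
    calc f^[m] y i ≤ f^[m] (fun j => c + x j) i := hmon' m hyx i
      _ = c + f^[m] x i := by rw [hhom']
      _ = c + f^[m % k] x i := by rw [hperiod]
      _ ≤ c + y i := by
          have := hjy (m % k) (Nat.mod_lt m hk) i
          linarith
  -- the limit
  set v : Fin n → ℝ := fun i => ⨆ m, f^[m] y i with hv
  have htend : ∀ i, Filter.Tendsto (fun m => f^[m] y i) Filter.atTop (nhds (v i)) := by
    intro i
    apply tendsto_atTop_ciSup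
    · intro a b hab; exact hseqmono hab i
    · exact ⟨c + y i, by rintro r ⟨m, rfl⟩; exact hbd m i⟩
  have htendv : Filter.Tendsto (fun m => f^[m] y) Filter.atTop (nhds v) :=
    tendsto_pi_nhds.mpr htend
  have h1 : Filter.Tendsto (fun m => f^[m+1] y) Filter.atTop (nhds v) :=
    htendv.comp (Filter.tendsto_add_atTop_nat 1)
  have h2 : Filter.Tendsto (fun m => f^[m+1] y) Filter.atTop (nhds (f v)) := by
    have : (fun m => f^[m+1] y) = (fun z => f z) ∘ (fun m => f^[m] y) := by
      funext m; exact Function.iterate_succ_apply' f m y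
    rw [this]
    exact (lip.continuous.tendsto v).comp htendv
  exact ⟨v, tendsto_nhds_unique h2 h1⟩
end
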